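/- arXiv:0801.2082 — 5 statements merged into one kernel-verified Lean document; each statement's English description precedes it below -/
import Mathlib

section
/- For any complex number ω with |ω| = 1 and ω ≠ 1, the partial sums satisfy ∑_{n=1}^{N} ω^n/n = -log(1-ω) + O(1/N); precisely, there is a constant C such that |∑_{n=1}^{N} ω^n/n + log(1-ω)| ≤ C/N for all N ≥ 1. -/
open Finset Filter Topology

/-- Abel summation identity for `∑ ω^n / n` over `Ioc N K`. -/
lemma abel_id (ω : ℂ) (N : ℕ) : ∀ K, N ≤ K →
    ∑ n ∈ Finset.Ioc N K, ω ^ n / (n : ℂ) =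
      (∑ i ∈ Finset.Icc 1 K, ω ^ i) / ((K : ℂ) + 1)
        - (∑ i ∈ Finset.Icc 1 N, ω ^ i) / ((N : ℂ) + 1)
        + ∑ n ∈ Finset.Ioc N K,
            (∑ i ∈ Finset.Icc 1 n, ω ^ i) * (1 / (n : ℂ) - 1 / ((n : ℂ) + 1)) := by
  refine Nat.le_induction ?_ ?_
  · simp
  · intro K hK ih
    rw [Finset.sum_Ioc_succ_top (by omega), Finset.sum_Ioc_succ_top (by omega), ih]
    have hIcc : ∑ i ∈ Finset.Icc 1 (K + 1), ω ^ i
        = (∑ i ∈ Finset.Icc 1 K, ω ^ i) + ω ^ (K + 1) :=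
      Finset.sum_Icc_succ_top (by omega) _
    have h1 : ((K : ℂ) + 1) ≠ 0 := by
      exact_mod_cast Nat.cast_add_one_ne_zero (R := ℂ) K
    have h2 : ((K : ℂ) + 1 + 1) ≠ 0 := by
      have := Nat.cast_add_one_ne_zero (R := ℂ) (K + 1)
      push_cast at this
      convert this using 2
    rw [hIcc]
    push_cast
    field_simp
    ring

lemma telescope_id (N : ℕ) : ∀ K, N ≤ K →
    ∑ n ∈ Finset.Ioc N K, (1 / (n : ℝ) - 1 / ((n : ℝ) + 1))
      = 1 / ((N : ℝ) + 1) - 1 / ((K : ℝ) + 1) := by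
  refine Nat.le_induction ?_ ?_
  · simp
  · intro K hK ih
    rw [Finset.sum_Ioc_succ_top (by omega), ih]
    push_cast
    ring

lemma partial_geom_bound (ω : ℂ) (hω : ‖ω‖ = 1) (hω1 : ω ≠ 1) (n : ℕ) :
    ‖(∑ i ∈ Finset.Icc 1 n, ω ^ i)‖ ≤ 2 / ‖(1 - ω)‖ := by
  have h0 : (1 : ℂ) - ω ≠ 0 := sub_ne_zero.mpr (Ne.symm hω1)
  have habs : 0 < ‖(1 - ω)‖ := by
    simpa using (norm_pos_iff.mpr h0)
  have hre : ∑ i ∈ Finset.Icc 1 n, ω ^ i = ω * ((ω ^ n - 1) / (ω - 1)) := by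
    rw [← Finset.Ico_add_one_right_eq_Icc, Finset.sum_Ico_eq_sum_range]
    simp only [Nat.add_sub_cancel, Nat.succ_sub_one]
    rw [← geom_sum_eq hω1 n, Finset.mul_sum]
    exact Finset.sum_congr rfl fun i _ => by ring
  rw [hre, norm_mul, norm_div, hω, one_mul]
  have : ‖(ω - 1)‖ = ‖(1 - ω)‖ := by
    rw [← norm_neg]; ring_nf
  rw [this]
  rw [div_le_div_iff_of_pos_right habs]
  calc ‖(ω ^ n - 1)‖ ≤ ‖(ω ^ n)‖ + ‖(1:ℂ)‖ :=
        norm_sub_le _ _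
    _ ≤ 2 := by rw [norm_pow, hω, one_pow, norm_one]; norm_num

lemma abs_nat_add_one (n : ℕ) : ‖((n : ℂ) + 1)‖ = (n : ℝ) + 1 := by
  rw [show ((n:ℂ)+1) = ((n+1:ℕ):ℂ) by push_cast; ring, Complex.norm_natCast]
  push_cast; ring

lemma abel_bound (ω : ℂ) (hω : ‖ω‖ = 1) (hω1 : ω ≠ 1) (N K : ℕ) (hNK : N ≤ K) :
    ‖(∑ n ∈ Finset.Ioc N K, ω ^ n / (n : ℂ))‖
      ≤ (6 / ‖(1 - ω)‖) / ((N : ℝ) + 1) := by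
  have h0 : (1 : ℂ) - ω ≠ 0 := sub_ne_zero.mpr (Ne.symm hω1)
  have habs : 0 < ‖(1 - ω)‖ := by
    simpa using (norm_pos_iff.mpr h0)
  set B := 2 / ‖(1 - ω)‖ with hB
  have hB0 : 0 ≤ B := by positivity
  have hD := partial_geom_bound ω hω hω1
  rw [abel_id ω N K hNK]
  have hNK' : (N : ℝ) + 1 ≤ (K : ℝ) + 1 := by
    have : (N : ℝ) ≤ K := Nat.cast_le.mpr hNK
    linarith
  have t1 : ‖((∑ i ∈ Finset.Icc 1 K, ω ^ i) / ((K : ℂ) + 1))‖ ≤ B / ((N : ℝ) + 1) := by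
    rw [norm_div, abs_nat_add_one]
    exact div_le_div₀ hB0 (hD K) (by positivity) hNK'
  have t2 : ‖((∑ i ∈ Finset.Icc 1 N, ω ^ i) / ((N : ℂ) + 1))‖ ≤ B / ((N : ℝ) + 1) := by
    rw [norm_div, abs_nat_add_one]
    exact div_le_div_of_nonneg_right (hD N) (by positivity)
  have t3 : ‖(∑ n ∈ Finset.Ioc N K,
      (∑ i ∈ Finset.Icc 1 n, ω ^ i) * (1 / (n : ℂ) - 1 / ((n : ℂ) + 1)))‖
      ≤ B / ((N : ℝ) + 1) := by
    calc ‖(∑ n ∈ Finset.Ioc N K,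
          (∑ i ∈ Finset.Icc 1 n, ω ^ i) * (1 / (n : ℂ) - 1 / ((n : ℂ) + 1)))‖
        ≤ ∑ n ∈ Finset.Ioc N K,
            ‖((∑ i ∈ Finset.Icc 1 n, ω ^ i) * (1 / (n : ℂ) - 1 / ((n : ℂ) + 1)))‖ :=
          norm_sum_le _ _
      _ ≤ ∑ n ∈ Finset.Ioc N K, B * (1 / (n : ℝ) - 1 / ((n : ℝ) + 1)) := by
          refine Finset.sum_le_sum fun n hn => ?_
          have hn1 : 1 ≤ n := le_trans (Nat.one_le_iff_ne_zero.mpr (by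
            rintro rfl; exact absurd (Finset.mem_Ioc.mp hn).1 (by omega))) le_rfl
          have hcast : (1 / (n : ℂ) - 1 / ((n : ℂ) + 1))
              = (((1 / (n : ℝ) - 1 / ((n : ℝ) + 1)) : ℝ) : ℂ) := by push_cast; ring
          have hpos : 0 ≤ 1 / (n : ℝ) - 1 / ((n : ℝ) + 1) := by
            have h1 : (1 : ℝ) ≤ (n : ℝ) := by exact_mod_cast hn1
            have : 1 / ((n : ℝ) + 1) ≤ 1 / (n : ℝ) :=
              one_div_le_one_div_of_le (by linarith) (by linarith)
            linarith
          rw [norm_mul, hcast, Complex.norm_real, Real.norm_eq_abs, abs_of_nonneg hpos]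
          exact mul_le_mul_of_nonneg_right (hD n) hpos
      _ = B * (1 / ((N : ℝ) + 1) - 1 / ((K : ℝ) + 1)) := by
          rw [← Finset.mul_sum, telescope_id N K hNK]
      _ ≤ B / ((N : ℝ) + 1) := by
          rw [div_eq_mul_one_div B]
          refine mul_le_mul_of_nonneg_left ?_ hB0
          have : 0 ≤ 1 / ((K : ℝ) + 1) := by positivity
          linarith
  calc ‖((∑ i ∈ Finset.Icc 1 K, ω ^ i) / ((K : ℂ) + 1)
          - (∑ i ∈ Finset.Icc 1 N, ω ^ i) / ((N : ℂ) + 1)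
          + ∑ n ∈ Finset.Ioc N K,
              (∑ i ∈ Finset.Icc 1 n, ω ^ i) * (1 / (n : ℂ) - 1 / ((n : ℂ) + 1)))‖
      ≤ ‖((∑ i ∈ Finset.Icc 1 K, ω ^ i) / ((K : ℂ) + 1)
          - (∑ i ∈ Finset.Icc 1 N, ω ^ i) / ((N : ℂ) + 1))‖
        + ‖(∑ n ∈ Finset.Ioc N K,
              (∑ i ∈ Finset.Icc 1 n, ω ^ i) * (1 / (n : ℂ) - 1 / ((n : ℂ) + 1)))‖ :=
        norm_add_le _ _
    _ ≤ (‖((∑ i ∈ Finset.Icc 1 K, ω ^ i) / ((K : ℂ) + 1))‖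
          + ‖((∑ i ∈ Finset.Icc 1 N, ω ^ i) / ((N : ℂ) + 1))‖)
        + ‖(∑ n ∈ Finset.Ioc N K,
              (∑ i ∈ Finset.Icc 1 n, ω ^ i) * (1 / (n : ℂ) - 1 / ((n : ℂ) + 1)))‖ := by
        gcongr
        exact norm_sub_le _ _
    _ ≤ B / ((N : ℝ) + 1) + B / ((N : ℝ) + 1) + B / ((N : ℝ) + 1) := by
        gcongr
    _ = (6 / ‖(1 - ω)‖) / ((N : ℝ) + 1) := by
        rw [hB]; ring

theorem stmt_3 (ω : ℂ) (hω : ‖ω‖ = 1) (hω1 : ω ≠ 1) :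
    ∃ C : ℝ, ∀ N : ℕ, 1 ≤ N →
      ‖(∑ n ∈ Finset.Icc 1 N, ω ^ n / (n : ℂ)) + Complex.log (1 - ω)‖
        ≤ C / N := by
  have h0 : (1 : ℂ) - ω ≠ 0 := sub_ne_zero.mpr (Ne.symm hω1)
  have habs : 0 < ‖(1 - ω)‖ := by
    simpa using (norm_pos_iff.mpr h0)
  set B := 6 / ‖(1 - ω)‖ with hB
  have hB0 : 0 ≤ B := by positivity
  set T : ℕ → ℂ := fun m => ∑ n ∈ Finset.Icc 1 m, ω ^ n / (n : ℂ) with hT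
  have hIoc : ∀ m : ℕ, T m = ∑ n ∈ Finset.Ioc 0 m, ω ^ n / (n : ℂ) := by
    intro m; rw [hT]; simp only [← Finset.Icc_add_one_left_eq_Ioc, zero_add]
  have hdiff : ∀ N K : ℕ, N ≤ K → T K - T N = ∑ n ∈ Finset.Ioc N K, ω ^ n / (n : ℂ) := by
    intro N K h
    have := Finset.sum_Ioc_consecutive (fun n : ℕ => ω ^ n / (n : ℂ)) (Nat.zero_le N) h
    rw [hIoc, hIoc, ← this]; ring
  -- Cauchy sequence
  have hb0 : Filter.Tendsto (fun N : ℕ => B / ((N : ℝ) + 1)) Filter.atTop (nhds 0) := by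
    have h1 := tendsto_one_div_add_atTop_nhds_zero_nat.const_mul B
    rw [mul_zero] at h1
    exact h1.congr fun n => by ring
  have hcau : CauchySeq T := by
    refine cauchySeq_of_le_tendsto_0' (fun N => B / ((N : ℝ) + 1)) (fun n m h => ?_) hb0
    rw [dist_eq_norm, ← norm_neg,
      neg_sub, hdiff n m h]
    exact abel_bound ω hω hω1 n m h
  obtain ⟨l, hl⟩ := cauchySeq_tendsto_of_complete hcau
  -- quantitative rate
  have hrate : ∀ N : ℕ, ‖(T N - l)‖ ≤ B / ((N : ℝ) + 1) := by
    intro N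
    have hten : Filter.Tendsto (fun K => ‖(T N - T K)‖) Filter.atTop
        (nhds (‖(T N - l)‖)) :=
      (continuous_norm.tendsto _).comp (tendsto_const_nhds.sub hl)
    refine le_of_tendsto hten (Filter.eventually_atTop.mpr ⟨N, fun K hK => ?_⟩)
    rw [show T N - T K = -(T K - T N) by ring, norm_neg, hdiff N K hK]
    exact abel_bound ω hω hω1 N K hK
  -- identify the limit
  set F : ℕ → ℂ := fun n => ω ^ n / (n : ℂ) with hF
  have hpartial : ∀ n : ℕ, ∑ i ∈ Finset.range (n + 1), F i = T n := by
    intro n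
    rw [Finset.sum_range_succ']
    have hTn : T n = ∑ i ∈ Finset.range n, F (1 + i) := by
      rw [hT]
      simp only
      rw [← Finset.Ico_add_one_right_eq_Icc, Finset.sum_Ico_eq_sum_range]
      simp only [Nat.add_sub_cancel, Nat.succ_sub_one]
      rfl
    have hF0 : F 0 = 0 := by rw [hF]; simp
    rw [hTn, hF0, add_zero]
    exact Finset.sum_congr rfl fun i _ => by rw [add_comm]
  have htend2 : Filter.Tendsto (fun n => ∑ i ∈ Finset.range n, F i) Filter.atTop (nhds l) := by
    refine (Filter.tendsto_add_atTop_iff_nat 1).mp ?_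
    simpa only [hpartial] using hl
  have habel := Complex.tendsto_tsum_powerSeries_nhdsWithin_lt htend2
  -- the mapped filter
  have hmap : (nhdsWithin (1 : ℝ) (Set.Iio 1)).map Complex.ofReal ≤ nhds (1 : ℂ) := by
    calc (nhdsWithin (1 : ℝ) (Set.Iio 1)).map Complex.ofReal
        ≤ (nhds (1 : ℝ)).map Complex.ofReal := Filter.map_mono nhdsWithin_le_nhds
      _ ≤ nhds (1 : ℂ) := by
          have h := Complex.continuous_ofReal.tendsto 1
          rw [Complex.ofReal_one] at h; exact h
  -- ω.re < 1
  have hre : ω.re < 1 := by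
    rcases lt_or_eq_of_le ((Complex.re_le_norm ω).trans_eq hω) with h | h
    · exact h
    · exfalso
      apply hω1
      have h2 := Complex.sq_norm ω
      rw [hω, Complex.normSq_apply] at h2
      have him : ω.im = 0 := by nlinarith
      exact Complex.ext (by simpa using h) (by simpa using him)
  have hslit : (1 - ω) ∈ Complex.slitPlane := Or.inl (by simpa using hre)
  have hlogcont : ContinuousAt (fun z : ℂ => -Complex.log (1 - ω * z)) 1 := by
    refine ContinuousAt.neg ?_
    have h1 : ContinuousAt (fun z : ℂ => 1 - ω * z) 1 :=
      (continuousAt_const.sub (continuousAt_const.mul continuousAt_id))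
    refine h1.clog ?_
    rw [mul_one]; exact hslit
  have hlogtend : Filter.Tendsto (fun z : ℂ => -Complex.log (1 - ω * z))
      ((nhdsWithin (1 : ℝ) (Set.Iio 1)).map Complex.ofReal)
      (nhds (-Complex.log (1 - ω))) := by
    have := hlogcont.tendsto.mono_left hmap
    simpa using this
  have heq : (fun z : ℂ => ∑' n, F n * z ^ n)
      =ᶠ[(nhdsWithin (1 : ℝ) (Set.Iio 1)).map Complex.ofReal]
      (fun z : ℂ => -Complex.log (1 - ω * z)) := by
    rw [Filter.eventuallyEq_iff_exists_mem]
    refine ⟨Complex.ofReal '' (Set.Ioo (-1) 1), ?_, ?_⟩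
    · rw [Filter.mem_map]
      have h1 : Set.Ioo (-1 : ℝ) 1 ∈ nhdsWithin (1 : ℝ) (Set.Iio 1) := by
        rw [mem_nhdsWithin_iff_eventually]
        filter_upwards [eventually_gt_nhds (show (-1 : ℝ) < 1 by norm_num)] with x hx hx'
        exact ⟨hx, hx'⟩
      filter_upwards [h1] with x hx
      exact ⟨x, hx, rfl⟩
    · rintro z ⟨x, ⟨hx1, hx2⟩, rfl⟩
      have hxn : ‖ω * (x : ℂ)‖ < 1 := by
        rw [norm_mul, hω, one_mul,
          Complex.norm_real, Real.norm_eq_abs]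
        exact abs_lt.mpr ⟨hx1, hx2⟩
      have hs := (Complex.hasSum_taylorSeries_neg_log hxn).tsum_eq
      simp only [hF]
      rw [← hs]
      refine tsum_congr fun n => ?_
      rw [mul_pow]; ring
  have hl2 : l = -Complex.log (1 - ω) := by
    have : (nhdsWithin (1 : ℝ) (Set.Iio 1)).map Complex.ofReal |>.NeBot :=
      Filter.map_neBot
    exact tendsto_nhds_unique (habel.congr' heq) hlogtend
  -- conclude
  refine ⟨B, fun N hN => ?_⟩
  have : (∑ n ∈ Finset.Icc 1 N, ω ^ n / (n : ℂ)) + Complex.log (1 - ω) = T N - l := by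
    rw [hl2, hT]; ring
  rw [this]
  refine (hrate N).trans ?_
  have hN0 : (0 : ℝ) < N := by exact_mod_cast hN
  exact div_le_div_of_nonneg_left hB0 hN0 (by linarith)
end

section
/- Let λ₁,…,λ_d be complex numbers with |λᵢ| > 1 for 1 ≤ i ≤ s, |λᵢ| = 1 for s+1 ≤ i ≤ s+2t, and |λᵢ| < 1 for i > s+2t, and set Λ = ∏_{i=1}^s λᵢ, κ = min(|λ_s|, |λ_{s+2t+1}|^{-1}) > 1 (interpreting appropriately if a range is empty). Then |∏_{i=1}^d (λᵢⁿ - 1) - (-1)^{d-s} Λⁿ ∏_{i=s+1}^{s+2t} (λᵢⁿ - 1)| / |Λ|ⁿ = O(κ^{-n}), i.e., there is a constant C with the left-hand side at most C·κ^{-n} for all n ≥ 1. -/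
lemma prod_sub_one_bound (x : ℕ → ℂ) (ε : ℝ) (hε0 : 0 ≤ ε) (hε1 : ε ≤ 1)
    (k : ℕ) (h : ∀ i < k, ‖x i - 1‖ ≤ ε) :
    ‖(∏ i ∈ Finset.range k, x i) - 1‖ ≤ 3 ^ k * ε := by
  induction k with
  | zero => simpa using hε0
  | succ k ih =>
    have hxk : ‖x k‖ ≤ 2 := by
      calc ‖x k‖ = ‖(x k - 1) + 1‖ := by ring_nf
        _ ≤ ‖x k - 1‖ + ‖(1:ℂ)‖ := norm_add_le _ _
        _ ≤ ε + 1 := by simp; exact h k (by omega)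
        _ ≤ 2 := by linarith
    have ih' := ih (fun i hi => h i (by omega))
    rw [Finset.prod_range_succ]
    have key : (∏ i ∈ Finset.range k, x i) * x k - 1
        = ((∏ i ∈ Finset.range k, x i) - 1) * x k + (x k - 1) := by ring
    rw [key]
    calc ‖_‖ ≤ ‖((∏ i ∈ Finset.range k, x i) - 1) * x k‖
          + ‖x k - 1‖ := norm_add_le _ _
      _ = ‖(∏ i ∈ Finset.range k, x i) - 1‖ * ‖x k‖
          + ‖x k - 1‖ := by rw [norm_mul]
      _ ≤ (3 ^ k * ε) * 2 + ε := by
          have h0 : (0:ℝ) ≤ ‖(∏ i ∈ Finset.range k, x i) - 1‖ :=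
            norm_nonneg _
          have hk := h k (by omega)
          nlinarith
      _ ≤ 3 ^ (k+1) * ε := by
          have h31 : (1:ℝ) ≤ 3 ^ k := one_le_pow₀ (by norm_num)
          rw [pow_succ]; nlinarith [mul_nonneg (by linarith : (0:ℝ) ≤ 3 ^ k - 1) hε0]

theorem stmt_7 (d s t : ℕ) (hst : s + 2 * t ≤ d) (lam : ℕ → ℂ)
    (h1 : ∀ i, i < s → 1 < ‖lam i‖)
    (h2 : ∀ i, s ≤ i → i < s + 2 * t → ‖lam i‖ = 1)
    (h3 : ∀ i, s + 2 * t ≤ i → i < d → ‖lam i‖ < 1)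
    (κ : ℝ) (hκ : 1 < κ)
    (hκ1 : ∀ i, i < s → κ ≤ ‖lam i‖)
    (hκ2 : ∀ i, s + 2 * t ≤ i → i < d → ‖lam i‖ ≤ κ⁻¹) :
    ∃ C : ℝ, ∀ n : ℕ, 1 ≤ n →
      ‖(∏ i ∈ Finset.range d, (lam i ^ n - 1)) -
          (-1 : ℂ) ^ (d - s) * (∏ i ∈ Finset.range s, lam i) ^ n *
            ∏ i ∈ Finset.Ico s (s + 2 * t), (lam i ^ n - 1)‖ /
        ‖∏ i ∈ Finset.range s, lam i‖ ^ n
      ≤ C * κ ^ (-(n : ℝ)) := by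
  refine ⟨2 ^ (2*t) * 3 ^ d, fun n hn => ?_⟩
  have hκ0 : (0:ℝ) < κ := lt_trans one_pos hκ
  -- κ ^ (-(n:ℝ)) = (κ ^ n)⁻¹
  have hrpow : κ ^ (-(n : ℝ)) = (κ ^ n)⁻¹ := by
    rw [Real.rpow_neg hκ0.le, Real.rpow_natCast]
  set ε : ℝ := (κ ^ n)⁻¹ with hεdef
  have hε0 : 0 ≤ ε := by positivity
  have hε1 : ε ≤ 1 := by
    rw [hεdef]
    exact inv_le_one_of_one_le₀ (one_le_pow₀ hκ.le)
  -- the auxiliary factors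
  set x : ℕ → ℂ := fun i =>
    if i < s then 1 - (lam i)⁻¹ ^ n else if i < s + 2 * t then 1 else 1 - lam i ^ n
    with hxdef
  have hlamne : ∀ i, i < s → lam i ≠ 0 := by
    intro i hi
    intro hz
    have := h1 i hi
    rw [hz] at this
    simp at this
    linarith
  -- bound on each factor
  have hxbound : ∀ i < d, ‖x i - 1‖ ≤ ε := by
    intro i hi
    rw [hxdef]
    by_cases hi1 : i < s
    · simp only [hi1, if_true]
      have : (1 : ℂ) - (lam i)⁻¹ ^ n - 1 = -((lam i)⁻¹ ^ n) := by ring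
      rw [this, norm_neg, norm_pow, norm_inv]
      rw [hεdef, ← inv_pow]
      apply pow_le_pow_left₀ (by positivity)
      exact inv_anti₀ hκ0 (hκ1 i hi1)
    · simp only [hi1, if_false]
      by_cases hi2 : i < s + 2 * t
      · simp [hi2, hε0]
      · simp only [hi2, if_false]
        have : (1 : ℂ) - lam i ^ n - 1 = -(lam i ^ n) := by ring
        rw [this, norm_neg, norm_pow]
        rw [hεdef, ← inv_pow]
        apply pow_le_pow_left₀ (norm_nonneg _)
        exact hκ2 i (by omega) hi
  have hQ : ‖(∏ i ∈ Finset.range d, x i) - 1‖ ≤ 3 ^ d * ε :=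
    prod_sub_one_bound x ε hε0 hε1 d hxbound
  -- split products
  have hsplit : ∀ f : ℕ → ℂ, (∏ i ∈ Finset.range d, f i) =
      (∏ i ∈ Finset.range s, f i) * (∏ i ∈ Finset.Ico s (s + 2*t), f i) *
      (∏ i ∈ Finset.Ico (s + 2*t) d, f i) := by
    intro f
    rw [Finset.range_eq_Ico, ← Finset.prod_Ico_consecutive f (Nat.zero_le (s+2*t)) hst,
      ← Finset.prod_Ico_consecutive f (Nat.zero_le s) (by omega : s ≤ s + 2*t),
      ← Finset.range_eq_Ico]
  -- head identity
  have hhead : (∏ i ∈ Finset.range s, (lam i ^ n - 1)) =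
      (∏ i ∈ Finset.range s, lam i) ^ n * (∏ i ∈ Finset.range s, x i) := by
    rw [← Finset.prod_pow, ← Finset.prod_mul_distrib]
    apply Finset.prod_congr rfl
    intro i hi
    rw [Finset.mem_range] at hi
    rw [hxdef]
    simp only [hi, if_true]
    have hne : lam i ^ n ≠ 0 := pow_ne_zero _ (hlamne i hi)
    rw [inv_pow, mul_sub, mul_one, mul_inv_cancel₀ hne]
  -- middle x product
  have hmidx : (∏ i ∈ Finset.Ico s (s + 2*t), x i) = 1 := by
    apply Finset.prod_eq_one
    intro i hi
    rw [Finset.mem_Ico] at hi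
    rw [hxdef]
    simp only [Nat.not_lt_of_ge hi.1, if_false, hi.2, if_true]
  -- tail identity
  have htail : (∏ i ∈ Finset.Ico (s + 2*t) d, (lam i ^ n - 1)) =
      (-1 : ℂ) ^ (d - (s + 2*t)) * (∏ i ∈ Finset.Ico (s + 2*t) d, x i) := by
    have : ∀ i ∈ Finset.Ico (s + 2*t) d, lam i ^ n - 1 = (-1) * x i := by
      intro i hi
      rw [Finset.mem_Ico] at hi
      rw [hxdef]
      simp only [Nat.not_lt_of_ge (by omega : s ≤ i), if_false,
        Nat.not_lt_of_ge hi.1, if_false]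
      ring
    rw [Finset.prod_congr rfl this, Finset.prod_mul_distrib, Finset.prod_const,
      Nat.card_Ico]
  -- sign identity
  have hsign : ((-1 : ℂ)) ^ (d - s) = (-1 : ℂ) ^ (d - (s + 2*t)) := by
    have : d - s = (d - (s + 2*t)) + 2 * t := by omega
    rw [this, pow_add, pow_mul, neg_one_sq, one_pow, mul_one]
  -- the key factorization
  set Λ : ℂ := ∏ i ∈ Finset.range s, lam i with hΛdef
  set Pmid : ℂ := ∏ i ∈ Finset.Ico s (s + 2*t), (lam i ^ n - 1) with hPmiddef
  have hkey : (∏ i ∈ Finset.range d, (lam i ^ n - 1)) -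
      (-1 : ℂ) ^ (d - s) * Λ ^ n * Pmid
      = (-1 : ℂ) ^ (d - (s + 2*t)) * Λ ^ n * Pmid *
        ((∏ i ∈ Finset.range d, x i) - 1) := by
    rw [hsplit (fun i => lam i ^ n - 1), hsplit x, hhead, htail, hmidx, hsign]
    ring
  rw [hkey]
  have hΛabs : (1:ℝ) ≤ ‖Λ‖ := by
    rw [hΛdef, norm_prod]
    calc (1:ℝ) = ∏ _i ∈ Finset.range s, (1:ℝ) := by simp
      _ ≤ ∏ i ∈ Finset.range s, ‖lam i‖ :=
        Finset.prod_le_prod (fun _ _ => zero_le_one)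
          (fun i hi => (h1 i (Finset.mem_range.mp hi)).le)
  have hΛn : (0:ℝ) < ‖Λ‖ ^ n := by positivity
  rw [norm_mul, norm_mul, norm_mul, norm_pow, norm_pow]
  simp only [norm_neg, norm_one, one_pow, one_mul]
  rw [div_le_iff₀ hΛn]
  have hPmidbound : ‖Pmid‖ ≤ 2 ^ (2*t) := by
    rw [hPmiddef, norm_prod]
    calc (∏ i ∈ Finset.Ico s (s + 2*t), ‖lam i ^ n - 1‖)
        ≤ ∏ i ∈ Finset.Ico s (s + 2*t), 2 := by
          apply Finset.prod_le_prod (fun i _ => norm_nonneg _)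
          intro i hi
          rw [Finset.mem_Ico] at hi
          calc ‖lam i ^ n - 1‖ ≤ ‖lam i ^ n‖ + ‖(1:ℂ)‖ :=
                norm_sub_le _ _
            _ = 2 := by rw [norm_pow, h2 i hi.1 hi.2]; norm_num
      _ = 2 ^ (2*t) := by rw [Finset.prod_const, Nat.card_Ico]; congr 1; omega
  have hQ' : ‖(∏ i ∈ Finset.range d, x i) - 1‖ ≤ 3 ^ d * ε := hQ
  rw [hrpow]
  calc ‖Λ‖ ^ n * ‖Pmid‖ *
        ‖(∏ i ∈ Finset.range d, x i) - 1‖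
      ≤ ‖Λ‖ ^ n * (2 ^ (2*t)) * (3 ^ d * ε) := by
        apply mul_le_mul
        · exact mul_le_mul_of_nonneg_left hPmidbound hΛn.le
        · exact hQ'
        · exact norm_nonneg _
        · positivity
      _ = 2 ^ (2*t) * 3 ^ d * ε * ‖Λ‖ ^ n := by ring
end

section
/- Let θ₁, θ₂, θ₃ be real numbers with θ₂ = 2θ₁, θ₃ = 3θ₁ and θ₁ irrational. Then (1/N) ∑_{n=1}^N ∏_{j=1}^3 (2 - 2cos(2πnθⱼ)) → 6 as N → ∞. -/
open Filter

lemma key (a : ℝ) : (2-2*Real.cos a)*(2-2*Real.cos (2*a))*(2-2*Real.cos (3*a)) =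
    6 - 6*Real.cos (2*a) - 4*Real.cos (3*a) + 2*Real.cos (4*a) + 4*Real.cos (5*a) - 2*Real.cos (6*a) := by
  have e2 : (2:ℝ)*a = a + a := by ring
  have e3 : (3:ℝ)*a = a + (a + a) := by ring
  have e4 : (4:ℝ)*a = a + (a + (a + a)) := by ring
  have e5 : (5:ℝ)*a = a + (a + (a + (a + a))) := by ring
  have e6 : (6:ℝ)*a = a + (a + (a + (a + (a + a)))) := by ring
  rw [e2, e3, e4, e5, e6]
  simp only [Real.cos_add, Real.sin_add]
  have hs := Real.sin_sq_add_cos_sq a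
  set s := Real.sin a
  set c := Real.cos a
  linear_combination (-2*s^4 + 8*c^2*s^2 + 4*c*s^2 - 4*s^2 - 6*c^4 + 4*c^3 + 8*c - 2) * hs

lemma avg_cos (β : ℝ) (hβ : ∀ m : ℤ, β ≠ 2 * Real.pi * m) :
    Tendsto (fun N : ℕ => (1 / N : ℝ) * ∑ n ∈ Finset.Icc 1 N, Real.cos (β * n))
      atTop (nhds 0) := by
  set z : ℂ := Complex.exp (β * Complex.I) with hz
  have hz1 : z ≠ 1 := by
    rw [hz, Ne, Complex.exp_eq_one_iff]
    rintro ⟨m, hm⟩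
    apply hβ m
    have : (β : ℂ) = 2 * Real.pi * m :=
      mul_right_cancel₀ Complex.I_ne_zero (by linear_combination hm)
    exact_mod_cast this
  have hzabs : ‖z‖ = 1 := Complex.norm_exp_ofReal_mul_I β
  have hd : (0:ℝ) < ‖z - 1‖ := norm_sub_pos_iff.mpr hz1
  have hbound : ∀ N : ℕ, |∑ n ∈ Finset.Icc 1 N, Real.cos (β * n)| ≤ 2 / ‖z - 1‖ := by
    intro N
    have h1 : ∑ n ∈ Finset.Icc 1 N, z ^ n = z * ((z ^ N - 1) / (z - 1)) := by
      rw [← Finset.Ico_add_one_right_eq_Icc, Finset.sum_Ico_eq_sum_range]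
      simp only [Nat.add_sub_cancel, Nat.succ_sub_one, pow_add, pow_one]
      rw [← Finset.mul_sum, geom_sum_eq hz1]
    have h2 : ∑ n ∈ Finset.Icc 1 N, Real.cos (β * n) = (∑ n ∈ Finset.Icc 1 N, z ^ n).re := by
      rw [Complex.re_sum]
      refine Finset.sum_congr rfl fun n _ => ?_
      rw [hz, ← Complex.exp_nat_mul]
      have : (n : ℂ) * (↑β * Complex.I) = (↑(β * n) : ℂ) * Complex.I := by push_cast; ring
      rw [this, Complex.exp_ofReal_mul_I_re]
    rw [h2]
    calc |(∑ n ∈ Finset.Icc 1 N, z ^ n).re| ≤ ‖∑ n ∈ Finset.Icc 1 N, z ^ n‖ :=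
          Complex.abs_re_le_norm _
      _ ≤ 2 / ‖z - 1‖ := by
          rw [h1, norm_mul, norm_div, hzabs, one_mul]
          gcongr
          calc ‖z ^ N - 1‖ ≤ ‖z ^ N‖ + ‖(1:ℂ)‖ := norm_sub_le _ _
            _ = 2 := by rw [norm_pow, hzabs]; norm_num
  have hC : Tendsto (fun N : ℕ => (2 / ‖z - 1‖) / N) atTop (nhds 0) :=
    tendsto_const_div_atTop_nhds_zero_nat _
  apply squeeze_zero_norm _ hC
  intro N
  rw [Real.norm_eq_abs, abs_mul, abs_of_nonneg (show (0:ℝ) ≤ 1/N by positivity)]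
  calc (1/N:ℝ) * |∑ n ∈ Finset.Icc 1 N, Real.cos (β * n)| ≤ 1/N * (2 / ‖z - 1‖) :=
        mul_le_mul_of_nonneg_left (hbound N) (by positivity)
    _ = 2 / ‖z - 1‖ / N := by ring

theorem stmt_13 (θ₁ θ₂ θ₃ : ℝ) (h2 : θ₂ = 2 * θ₁) (h3 : θ₃ = 3 * θ₁)
    (hθ : Irrational θ₁) :
    Tendsto (fun N : ℕ =>
        (1 / N : ℝ) * ∑ n ∈ Finset.Icc 1 N,
          (2 - 2 * Real.cos (2 * Real.pi * n * θ₁)) *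
            (2 - 2 * Real.cos (2 * Real.pi * n * θ₂)) *
              (2 - 2 * Real.cos (2 * Real.pi * n * θ₃)))
      atTop (nhds 6) := by
  have hirr : ∀ k : ℕ, k ≠ 0 → ∀ m : ℤ, 2 * Real.pi * k * θ₁ ≠ 2 * Real.pi * m := by
    intro k hk m heq
    have hk' : ((k:ℝ)*θ₁) = (m:ℝ) := by
      have h2pi : (2 * Real.pi) ≠ 0 := by positivity
      apply mul_left_cancel₀ h2pi
      linear_combination heq
    exact ((hθ.natCast_mul hk).ne_int m) hk'
  set β : ℕ → ℝ := fun k => 2 * Real.pi * k * θ₁ with hβ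
  set A : ℕ → ℕ → ℝ := fun k N => (1 / N : ℝ) * ∑ n ∈ Finset.Icc 1 N, Real.cos (β k * n)
    with hA
  have hAk : ∀ k : ℕ, k ≠ 0 → Tendsto (A k) atTop (nhds 0) := fun k hk =>
    avg_cos (β k) (hirr k hk)
  have hkey : ∀ n : ℕ,
      (2 - 2 * Real.cos (2 * Real.pi * n * θ₁)) *
        (2 - 2 * Real.cos (2 * Real.pi * n * θ₂)) *
          (2 - 2 * Real.cos (2 * Real.pi * n * θ₃))
      = 6 - 6 * Real.cos (β 2 * n) - 4 * Real.cos (β 3 * n) + 2 * Real.cos (β 4 * n)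
          + 4 * Real.cos (β 5 * n) - 2 * Real.cos (β 6 * n) := by
    intro n
    have := key (2 * Real.pi * n * θ₁)
    have a2 : 2 * Real.pi * (n:ℝ) * θ₂ = 2 * (2 * Real.pi * n * θ₁) := by rw [h2]; ring
    have a3 : 2 * Real.pi * (n:ℝ) * θ₃ = 3 * (2 * Real.pi * n * θ₁) := by rw [h3]; ring
    have b2 : (2:ℝ) * (2 * Real.pi * n * θ₁) = β 2 * n := by simp [hβ]; ring
    have b3 : (3:ℝ) * (2 * Real.pi * n * θ₁) = β 3 * n := by simp [hβ]; ring
    have b4 : (4:ℝ) * (2 * Real.pi * n * θ₁) = β 4 * n := by simp [hβ]; ring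
    have b5 : (5:ℝ) * (2 * Real.pi * n * θ₁) = β 5 * n := by simp [hβ]; ring
    have b6 : (6:ℝ) * (2 * Real.pi * n * θ₁) = β 6 * n := by simp [hβ]; ring
    rw [a2, a3, this, b2, b3, b4, b5, b6]
  have hfun : ∀ N : ℕ,
      (1 / N : ℝ) * ∑ n ∈ Finset.Icc 1 N,
          (2 - 2 * Real.cos (2 * Real.pi * n * θ₁)) *
            (2 - 2 * Real.cos (2 * Real.pi * n * θ₂)) *
              (2 - 2 * Real.cos (2 * Real.pi * n * θ₃))
      = 6 * ((N:ℝ) / N) - 6 * A 2 N - 4 * A 3 N + 2 * A 4 N + 4 * A 5 N - 2 * A 6 N := by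
    intro N
    rw [Finset.sum_congr rfl (fun n _ => hkey n)]
    simp only [hA]
    rw [Finset.sum_sub_distrib, Finset.sum_add_distrib, Finset.sum_add_distrib,
      Finset.sum_sub_distrib, Finset.sum_sub_distrib, Finset.sum_const, Nat.card_Icc,
      ← Finset.mul_sum, ← Finset.mul_sum, ← Finset.mul_sum, ← Finset.mul_sum, ← Finset.mul_sum]
    simp only [Nat.add_sub_cancel, nsmul_eq_mul]
    ring
  have h1 : Tendsto (fun N : ℕ => (N:ℝ) / N) atTop (nhds 1) := by
    apply Tendsto.congr' _ tendsto_const_nhds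
    filter_upwards [eventually_ge_atTop 1] with N hN
    rw [div_self (by exact_mod_cast Nat.pos_of_ne_zero (by omega) |>.ne')]
  have := (((((h1.const_mul 6).sub ((hAk 2 (by norm_num)).const_mul 6)).sub
      ((hAk 3 (by norm_num)).const_mul 4)).add ((hAk 4 (by norm_num)).const_mul 2)).add
      ((hAk 5 (by norm_num)).const_mul 4)).sub ((hAk 6 (by norm_num)).const_mul 2)
  simp only [mul_one, mul_zero, sub_zero, add_zero] at this
  refine Tendsto.congr (fun N => (hfun N).symm) ?_
  convert this using 2
end

section
/- Let F : ℕ → ℝ satisfy 0 ≤ F(n) ≤ C·Λⁿ for all n ≥ 1, for some constants C > 0 and Λ > 1. Then the series ∑_{n=1}^∞ (1/(n Λⁿ)) ∑_{d | n, d < n} |μ(n/d)| F(d) converges, and its tail beyond N is O(Λ^{-N/2}). -/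
open ArithmeticFunction
open scoped ArithmeticFunction.Moebius

theorem stmt_15 (F : ℕ → ℝ) (C L : ℝ) (hC : 0 < C) (hL : 1 < L)
    (hF : ∀ n : ℕ, 1 ≤ n → 0 ≤ F n ∧ F n ≤ C * L ^ n) :
    Summable (fun n : ℕ =>
      (1 / (n * L ^ n)) * ∑ d ∈ n.properDivisors, |(μ (n / d) : ℝ)| * F d) ∧
    ∃ C' : ℝ, ∀ N : ℕ, 1 ≤ N →
      |(∑' n : ℕ, (1 / (n * L ^ n)) * ∑ d ∈ n.properDivisors, |(μ (n / d) : ℝ)| * F d)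
          - ∑ n ∈ Finset.range (N + 1),
              (1 / (n * L ^ n)) * ∑ d ∈ n.properDivisors, |(μ (n / d) : ℝ)| * F d|
        ≤ C' * L ^ (-(N : ℝ) / 2) := by
  have hL0 : (0:ℝ) < L := lt_trans one_pos hL
  set a : ℕ → ℝ := fun n =>
    (1 / (n * L ^ n)) * ∑ d ∈ n.properDivisors, |(μ (n / d) : ℝ)| * F d with ha
  set r : ℝ := L ^ (-(1:ℝ)/2) with hr
  have hr0 : 0 < r := Real.rpow_pos_of_pos hL0 _
  have hr1 : r < 1 := Real.rpow_lt_one_of_one_lt_of_neg hL (by norm_num)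
  -- r ^ n * L ^ n = L ^ (n/2)
  have hrpow : ∀ n : ℕ, r ^ n * L ^ n = L ^ ((n:ℝ)/2) := by
    intro n
    rw [hr, ← Real.rpow_natCast L n, ← Real.rpow_natCast (L ^ (-(1:ℝ)/2)) n,
      ← Real.rpow_mul hL0.le, ← Real.rpow_add hL0]
    congr 1
    ring
  -- nonnegativity of terms
  have ha_nonneg : ∀ n, 0 ≤ a n := by
    intro n
    apply mul_nonneg
    · positivity
    · apply Finset.sum_nonneg
      intro d hd
      have hd1 : 1 ≤ d := Nat.pos_of_mem_properDivisors hd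
      exact mul_nonneg (abs_nonneg _) (hF d hd1).1
  -- key bound : a n ≤ C * r ^ n
  have key : ∀ n, a n ≤ C * r ^ n := by
    intro n
    rcases Nat.eq_zero_or_pos n with h0 | hn
    · subst h0
      simp only [ha, Nat.properDivisors_zero, Finset.sum_empty, mul_zero, pow_zero, mul_one]
      positivity
    · have hnL : (0:ℝ) < (n:ℝ) * L ^ n := by positivity
      have hsum : (∑ d ∈ n.properDivisors, |(μ (n / d) : ℝ)| * F d)
          ≤ (n : ℝ) * (C * L ^ ((n:ℝ)/2)) := by
        calc (∑ d ∈ n.properDivisors, |(μ (n / d) : ℝ)| * F d)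
            ≤ ∑ _d ∈ n.properDivisors, C * L ^ ((n:ℝ)/2) := by
              apply Finset.sum_le_sum
              intro d hd
              have hd1 : 1 ≤ d := Nat.pos_of_mem_properDivisors hd
              obtain ⟨hdvd, hlt⟩ := Nat.mem_properDivisors.mp hd
              have h2d : 2 * d ≤ n := by
                obtain ⟨k, hk⟩ := hdvd
                have hk2 : 2 ≤ k := by
                  rcases Nat.lt_or_ge k 2 with h | h
                  · interval_cases k <;> omega
                  · exact h
                calc 2 * d = d * 2 := by ring
                  _ ≤ d * k := Nat.mul_le_mul_left d hk2
                  _ = n := hk.symm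
              have hdn : (d:ℝ) ≤ (n:ℝ)/2 := by
                rw [le_div_iff₀ (by norm_num)]
                have := (Nat.cast_le (α := ℝ)).mpr h2d
                push_cast at this
                linarith
              have hmu : |(μ (n / d) : ℝ)| ≤ 1 := by
                rw [← Int.cast_abs]
                exact_mod_cast ArithmeticFunction.abs_moebius_le_one
              have hFd : F d ≤ C * L ^ ((n:ℝ)/2) := by
                refine le_trans (hF d hd1).2 ?_
                have hpow : (L:ℝ) ^ d ≤ L ^ ((n:ℝ)/2) := by
                  rw [← Real.rpow_natCast L d]
                  exact (Real.rpow_le_rpow_left_iff hL).mpr hdn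
                nlinarith
              calc |(μ (n / d) : ℝ)| * F d ≤ 1 * (C * L ^ ((n:ℝ)/2)) :=
                    mul_le_mul hmu hFd (hF d hd1).1 (by norm_num)
                _ = C * L ^ ((n:ℝ)/2) := one_mul _
          _ = (n.properDivisors.card : ℝ) * (C * L ^ ((n:ℝ)/2)) := by
              rw [Finset.sum_const, nsmul_eq_mul]
          _ ≤ (n : ℝ) * (C * L ^ ((n:ℝ)/2)) := by
              apply mul_le_mul_of_nonneg_right _ (by positivity)
              have hc : n.properDivisors.card ≤ n := by
                have : n.properDivisors ⊆ Finset.range n := fun d hd =>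
                  Finset.mem_range.mpr (Nat.mem_properDivisors.mp hd).2
                simpa using Finset.card_le_card this
              exact_mod_cast hc
      show (1 / ((n:ℝ) * L ^ n)) * _ ≤ _
      rw [one_div_mul_eq_div, div_le_iff₀ hnL]
      calc (∑ d ∈ n.properDivisors, |(μ (n / d) : ℝ)| * F d)
          ≤ (n : ℝ) * (C * L ^ ((n:ℝ)/2)) := hsum
        _ = C * r ^ n * ((n:ℝ) * L ^ n) := by rw [← hrpow n]; ring
  have hgeom : Summable (fun n : ℕ => C * r ^ n) :=
    (summable_geometric_of_lt_one hr0.le hr1).mul_left C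
  have hsummable : Summable a := Summable.of_nonneg_of_le ha_nonneg key hgeom
  refine ⟨hsummable, C * (1 - r)⁻¹, fun N _hN => ?_⟩
  have h1r : 0 < 1 - r := by linarith
  have hsplit := Summable.sum_add_tsum_nat_add (N + 1) hsummable
  have hshift : Summable (fun i => a (i + (N + 1))) :=
    (summable_nat_add_iff (N + 1)).mpr hsummable
  have htail_nonneg : 0 ≤ ∑' i, a (i + (N + 1)) :=
    tsum_nonneg fun i => ha_nonneg _
  have heq : (∑' n, a n) - ∑ n ∈ Finset.range (N + 1), a n = ∑' i, a (i + (N + 1)) := by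
    rw [← hsplit]; ring
  rw [heq, abs_of_nonneg htail_nonneg]
  have hbound : (∑' i, a (i + (N + 1))) ≤ ∑' i : ℕ, (C * r ^ (N + 1)) * r ^ i := by
    apply Summable.tsum_le_tsum _ hshift
    · exact (summable_geometric_of_lt_one hr0.le hr1).mul_left _
    · intro i
      calc a (i + (N + 1)) ≤ C * r ^ (i + (N + 1)) := key _
        _ = C * r ^ (N + 1) * r ^ i := by rw [pow_add]; ring
  have hgsum : (∑' i : ℕ, (C * r ^ (N + 1)) * r ^ i) = C * r ^ (N + 1) * (1 - r)⁻¹ := by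
    rw [tsum_mul_left, tsum_geometric_of_lt_one hr0.le hr1]
  have hrN : r ^ N = L ^ (-(N:ℝ)/2) := by
    rw [hr, ← Real.rpow_natCast (L ^ (-(1:ℝ)/2)) N, ← Real.rpow_mul hL0.le]
    congr 1
    ring
  calc (∑' i, a (i + (N + 1))) ≤ C * r ^ (N + 1) * (1 - r)⁻¹ := by rw [← hgsum]; exact hbound
    _ ≤ C * r ^ N * (1 - r)⁻¹ := by
        have : r ^ (N + 1) ≤ r ^ N := pow_le_pow_of_le_one hr0.le hr1.le (by omega)
        have h1 : (0:ℝ) ≤ (1 - r)⁻¹ := by positivity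
        exact mul_le_mul_of_nonneg_right (mul_le_mul_of_nonneg_left this hC.le) h1
    _ = C * (1 - r)⁻¹ * L ^ (-(N:ℝ)/2) := by rw [hrN]; ring
end

section
/- The matrix A = [[0,0,0,-1],[1,0,0,8],[0,1,0,-6],[0,0,1,8]] has characteristic polynomial x⁴ - 8x³ + 6x² - 8x + 1, determinant 1, and its characteristic polynomial has exactly two complex roots of modulus 1 (a conjugate pair, not roots of unity) and two real roots of modulus ≠ 1. -/
open Matrix Polynomial

/- Integer sequence representing `z^n + conj z^n = a_n + b_n * s` in `ℤ[s]`. -/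
private def abSeq : ℕ → ℤ × ℤ
  | 0 => (2, 0)
  | 1 => (0, 1)
  | (n+2) => (-4 * (abSeq (n+1)).2 - (abSeq n).1,
      (abSeq (n+1)).1 + 8 * (abSeq (n+1)).2 - (abSeq n).2)

private lemma abSeq_pow (z : ℂ) (s : ℝ) (hz : z ^ 2 = (s : ℂ) * z - 1)
    (hsum : z + (starRingEnd ℂ) z = (s : ℂ)) (hs2 : s ^ 2 = 8 * s - 4) :
    ∀ n : ℕ, z ^ n + (starRingEnd ℂ) z ^ n
      = ((abSeq n).1 : ℂ) + ((abSeq n).2 : ℂ) * (s : ℂ) := by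
  have hw : (starRingEnd ℂ) z ^ 2 = (s : ℂ) * (starRingEnd ℂ) z - 1 := by
    have h := congrArg (starRingEnd ℂ) hz
    simpa [_root_.map_pow, map_sub, _root_.map_mul, Complex.conj_ofReal] using h
  have hs2' : (s : ℂ) ^ 2 = 8 * (s : ℂ) - 4 := by exact_mod_cast congrArg (fun x : ℝ => (x : ℂ)) hs2
  intro n
  induction n using Nat.twoStepInduction with
  | zero => norm_num [abSeq]
  | one => simpa [abSeq] using hsum
  | more n ih1 ih2 =>
    have hz2 : z ^ (n+2) = (s : ℂ) * z ^ (n+1) - z ^ n := by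
      have h : z ^ (n+2) = z ^ n * z ^ 2 := by ring
      rw [h, hz]; ring
    have hw2 : (starRingEnd ℂ) z ^ (n+2)
        = (s : ℂ) * (starRingEnd ℂ) z ^ (n+1) - (starRingEnd ℂ) z ^ n := by
      have h : (starRingEnd ℂ) z ^ (n+2) = (starRingEnd ℂ) z ^ n * (starRingEnd ℂ) z ^ 2 := by
        ring
      rw [h, hw]; ring
    rw [hz2, hw2]
    show _ = ((abSeq (n+2)).1 : ℂ) + ((abSeq (n+2)).2 : ℂ) * (s : ℂ)
    simp only [abSeq]
    push_cast
    linear_combination (s : ℂ) * ih2 - ih1 + ((abSeq (n+1)).2 : ℂ) * hs2'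

private lemma abSeq_growth (s : ℝ) (hs2 : s ^ 2 = 8 * s - 4) (hsle : s ≤ 2) :
    ∀ n : ℕ, 2 ≤ ((abSeq n).1 : ℝ) + ((abSeq n).2 : ℝ) * (8 - s) ∧
      3 * (((abSeq n).1 : ℝ) + ((abSeq n).2 : ℝ) * (8 - s))
        ≤ ((abSeq (n+1)).1 : ℝ) + ((abSeq (n+1)).2 : ℝ) * (8 - s) := by
  have hs1 : s ≤ 1 := by nlinarith
  have hrec : ∀ m : ℕ, ((abSeq (m+2)).1 : ℝ) + ((abSeq (m+2)).2 : ℝ) * (8 - s)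
      = (8 - s) * (((abSeq (m+1)).1 : ℝ) + ((abSeq (m+1)).2 : ℝ) * (8 - s))
        - (((abSeq m).1 : ℝ) + ((abSeq m).2 : ℝ) * (8 - s)) := by
    intro m
    show ((abSeq (m+2)).1 : ℝ) + ((abSeq (m+2)).2 : ℝ) * (8 - s) = _
    simp only [abSeq]
    push_cast
    linear_combination (-((abSeq (m+1)).2 : ℝ)) * hs2
  intro n
  induction n using Nat.twoStepInduction with
  | zero =>
    constructor
    · norm_num [abSeq]
    · norm_num [abSeq]; linarith
  | one =>
    constructor
    · norm_num [abSeq]; linarith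
    · norm_num [abSeq]; linarith
  | more n ih1 ih2 =>
    obtain ⟨h1, h2⟩ := ih2
    have hd2 : 6 ≤ ((abSeq (n+2)).1 : ℝ) + ((abSeq (n+2)).2 : ℝ) * (8 - s) := by linarith
    refine ⟨by linarith, ?_⟩
    rw [hrec (n+1)]
    have hd2pos : (0:ℝ) ≤ ((abSeq (n+2)).1 : ℝ) + ((abSeq (n+2)).2 : ℝ) * (8 - s) := by linarith
    nlinarith [mul_le_mul_of_nonneg_right (show (4:ℝ) ≤ 5 - s by linarith) hd2pos]

private lemma no_root_of_unity (z : ℂ) (s : ℝ) (hz : z ^ 2 = (s : ℂ) * z - 1)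
    (hsum : z + (starRingEnd ℂ) z = (s : ℂ)) (hs2 : s ^ 2 = 8 * s - 4) (hsle : s ≤ 2) (hirr : Irrational s) :
    ∀ k : ℕ, 1 ≤ k → z ^ k ≠ 1 := by
  intro k hk hzk
  have key := abSeq_pow z s hz hsum hs2 k
  have hwk : (starRingEnd ℂ) z ^ k = 1 := by rw [← _root_.map_pow, hzk, _root_.map_one]
  rw [hzk, hwk] at key
  have hreal : ((abSeq k).1 : ℝ) + ((abSeq k).2 : ℝ) * s = 2 := by
    have h : ((((abSeq k).1 : ℝ) + ((abSeq k).2 : ℝ) * s : ℝ) : ℂ) = ((2 : ℝ) : ℂ) := by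
      push_cast
      linear_combination -key
    exact_mod_cast h
  have hb : (abSeq k).2 = 0 := by
    by_contra hb
    apply hirr
    have hbR : ((abSeq k).2 : ℝ) ≠ 0 := by exact_mod_cast hb
    refine ⟨((2 : ℚ) - ((abSeq k).1 : ℚ)) / ((abSeq k).2 : ℚ), ?_⟩
    push_cast
    field_simp
    linarith [hreal]
  have ha : ((abSeq k).1 : ℝ) = 2 := by
    rw [hb] at hreal; push_cast at hreal; linarith
  obtain ⟨m, rfl⟩ : ∃ m, k = m + 1 := ⟨k - 1, by omega⟩
  obtain ⟨g1, g2⟩ := abSeq_growth s hs2 hsle m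
  rw [hb] at g2
  push_cast at g2
  linarith

noncomputable section

private def rt3 : ℝ := Real.sqrt 3
private def uR : ℝ := Real.sqrt (4 * rt3 - 6)
private def vR : ℝ := Real.sqrt (6 + 4 * rt3)
private def zc1 : ℂ := ((2 - rt3 : ℝ) : ℂ) + (uR : ℝ) * Complex.I
private def zc2 : ℂ := ((2 - rt3 : ℝ) : ℂ) - (uR : ℝ) * Complex.I
private def zc3 : ℂ := ((2 + rt3 + vR : ℝ) : ℂ)
private def zc4 : ℂ := ((2 + rt3 - vR : ℝ) : ℂ)

private lemma rt3_sq : rt3 ^ 2 = 3 := Real.sq_sqrt (by norm_num)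
private lemma rt3_nonneg : 0 ≤ rt3 := Real.sqrt_nonneg 3
private lemma rt3_lb : 1.7 < rt3 := by nlinarith [rt3_sq, rt3_nonneg]
private lemma rt3_ub : rt3 < 1.8 := by nlinarith [rt3_sq, rt3_nonneg]
private lemma uR_sq : uR ^ 2 = 4 * rt3 - 6 := Real.sq_sqrt (by nlinarith [rt3_lb])
private lemma uR_pos : 0 < uR := Real.sqrt_pos.mpr (by nlinarith [rt3_lb])
private lemma vR_sq : vR ^ 2 = 6 + 4 * rt3 := Real.sq_sqrt (by nlinarith [rt3_lb])
private lemma vR_pos : 0 < vR := Real.sqrt_pos.mpr (by nlinarith [rt3_lb])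

private lemma hsum12 : zc1 + zc2 = ((4 - 2 * rt3 : ℝ) : ℂ) := by
  simp only [zc1, zc2]; push_cast; ring

private lemma hprod12 : zc1 * zc2 = 1 := by
  have h : zc1 * zc2 = (((2 - rt3) ^ 2 + uR ^ 2 : ℝ) : ℂ) := by
    simp only [zc1, zc2]; push_cast
    linear_combination (-(uR : ℂ) ^ 2) * Complex.I_sq
  rw [h, show ((2 - rt3) ^ 2 + uR ^ 2 : ℝ) = 1 by nlinarith [rt3_sq, uR_sq]]
  exact Complex.ofReal_one

private lemma hsum34 : zc3 + zc4 = ((4 + 2 * rt3 : ℝ) : ℂ) := by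
  simp only [zc3, zc4]; push_cast; ring

private lemma hprod34 : zc3 * zc4 = 1 := by
  have h : zc3 * zc4 = (((2 + rt3) ^ 2 - vR ^ 2 : ℝ) : ℂ) := by
    simp only [zc3, zc4]; push_cast; ring
  rw [h, show ((2 + rt3) ^ 2 - vR ^ 2 : ℝ) = 1 by nlinarith [rt3_sq, vR_sq]]
  exact Complex.ofReal_one

private lemma hquad1 : zc1 ^ 2 = ((4 - 2 * rt3 : ℝ) : ℂ) * zc1 - 1 := by
  linear_combination zc1 * hsum12 - hprod12

private lemma hquad2 : zc2 ^ 2 = ((4 - 2 * rt3 : ℝ) : ℂ) * zc2 - 1 := by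
  linear_combination zc2 * hsum12 - hprod12

private lemma hs2_val : (4 - 2 * rt3) ^ 2 = 8 * (4 - 2 * rt3) - 4 := by
  linear_combination 4 * rt3_sq

private lemma hsle_val : 4 - 2 * rt3 ≤ 2 := by nlinarith [rt3_lb]

private lemma hirr_val : Irrational (4 - 2 * rt3) := by
  have h3 : Irrational rt3 := by
    have := (Nat.prime_three).irrational_sqrt
    simpa [rt3] using this
  have h2 : Irrational ((2 : ℚ) * rt3) := h3.ratCast_mul (by norm_num)
  have h4 := h2.ratCast_sub (q := 4)
  have hcast : (4 - 2 * rt3 : ℝ) = ((4 : ℚ) : ℝ) - ((2 : ℚ) : ℝ) * rt3 := by push_cast; ring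
  rw [hcast]
  exact h4

private lemma hfact : (X ^ 4 - 8 * X ^ 3 + 6 * X ^ 2 - 8 * X + 1 : ℂ[X])
    = ((X - C zc1) * (X - C zc2)) * ((X - C zc3) * (X - C zc4)) := by
  have hA : C zc1 + C zc2 = C (((4 - 2 * rt3 : ℝ) : ℂ)) := by rw [← C_add, hsum12]
  have hB : C zc1 * C zc2 = 1 := by rw [← C_mul, hprod12, C_1]
  have hC' : C zc3 + C zc4 = C (((4 + 2 * rt3 : ℝ) : ℂ)) := by rw [← C_add, hsum34]
  have hD : C zc3 * C zc4 = 1 := by rw [← C_mul, hprod34, C_1]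
  have e1 : (X - C zc1) * (X - C zc2)
      = X ^ 2 - C (((4 - 2 * rt3 : ℝ) : ℂ)) * X + 1 := by
    rw [← hA, ← hB]; ring
  have e2 : (X - C zc3) * (X - C zc4)
      = X ^ 2 - C (((4 + 2 * rt3 : ℝ) : ℂ)) * X + 1 := by
    rw [← hC', ← hD]; ring
  rw [e1, e2]
  have h8 : C (((4 - 2 * rt3 : ℝ) : ℂ)) + C (((4 + 2 * rt3 : ℝ) : ℂ)) = 8 := by
    rw [← C_add, ← Complex.ofReal_add, show (4 - 2 * rt3) + (4 + 2 * rt3) = (8:ℝ) by ring]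
    push_cast
    exact map_ofNat C 8
  have h4 : C (((4 - 2 * rt3 : ℝ) : ℂ)) * C (((4 + 2 * rt3 : ℝ) : ℂ)) = 4 := by
    rw [← C_mul, ← Complex.ofReal_mul,
      show (4 - 2 * rt3) * (4 + 2 * rt3) = (4:ℝ) by linear_combination (-4) * rt3_sq]
    push_cast
    exact map_ofNat C 4
  linear_combination (X ^ 3 + X : ℂ[X]) * h8 - (X ^ 2 : ℂ[X]) * h4

private lemma hroots : (X ^ 4 - 8 * X ^ 3 + 6 * X ^ 2 - 8 * X + 1 : ℂ[X]).roots
    = ({zc1} + {zc2}) + ({zc3} + {zc4}) := by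
  have hne : ∀ w : ℂ, (X - C w : ℂ[X]) ≠ 0 := fun w => X_sub_C_ne_zero w
  rw [hfact,
    roots_mul (mul_ne_zero (mul_ne_zero (hne zc1) (hne zc2)) (mul_ne_zero (hne zc3) (hne zc4))),
    roots_mul (mul_ne_zero (hne zc1) (hne zc2)),
    roots_mul (mul_ne_zero (hne zc3) (hne zc4)),
    roots_X_sub_C, roots_X_sub_C, roots_X_sub_C, roots_X_sub_C]

private lemma habs1 : ‖zc1‖ = 1 := by
  have hre : zc1.re = 2 - rt3 := by simp [zc1]
  have him : zc1.im = uR := by simp [zc1]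
  rw [Complex.norm_def, Complex.normSq_apply, hre, him,
    show (2 - rt3) * (2 - rt3) + uR * uR = 1 by nlinarith [rt3_sq, uR_sq], Real.sqrt_one]

private lemma habs2 : ‖zc2‖ = 1 := by
  have hre : zc2.re = 2 - rt3 := by simp [zc2]
  have him : zc2.im = -uR := by simp [zc2]
  rw [Complex.norm_def, Complex.normSq_apply, hre, him,
    show (2 - rt3) * (2 - rt3) + -uR * -uR = 1 by nlinarith [rt3_sq, uR_sq], Real.sqrt_one]

private lemma hx34 : (2 + rt3 + vR) * (2 + rt3 - vR) = 1 := by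
  nlinarith [rt3_sq, vR_sq]

private lemma hx3_gt : 1 < 2 + rt3 + vR := by nlinarith [rt3_lb, vR_pos]

private lemma hx4_pos : 0 < 2 + rt3 - vR := by nlinarith [hx34, hx3_gt]

private lemma hx4_lt : 2 + rt3 - vR < 1 := by nlinarith [hx34, hx3_gt, hx4_pos]

private lemma habs3 : ‖zc3‖ ≠ 1 := by
  rw [show zc3 = ((2 + rt3 + vR : ℝ) : ℂ) from rfl, Complex.norm_real, Real.norm_eq_abs,
    abs_of_pos (by linarith [hx3_gt])]
  exact ne_of_gt hx3_gt

private lemma habs4 : ‖zc4‖ ≠ 1 := by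
  rw [show zc4 = ((2 + rt3 - vR : ℝ) : ℂ) from rfl, Complex.norm_real, Real.norm_eq_abs,
    abs_of_pos hx4_pos]
  exact ne_of_lt hx4_lt

private lemma hconj1 : (starRingEnd ℂ) zc1 = zc2 := by
  simp only [zc1, zc2, map_add, _root_.map_mul, Complex.conj_ofReal, Complex.conj_I]
  ring

private lemma hconj2 : (starRingEnd ℂ) zc2 = zc1 := by
  simp only [zc1, zc2, map_sub, _root_.map_mul, Complex.conj_ofReal, Complex.conj_I]
  ring

private lemma hne12 : zc2 ≠ zc1 := by
  intro h
  have h' := congrArg Complex.im h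
  simp [zc1, zc2] at h'
  exact absurd h' (by linarith [uR_pos])

end

open scoped Classical in
theorem stmt_16 :
    let A : Matrix (Fin 4) (Fin 4) ℤ :=
      !![0,0,0,-1; 1,0,0,8; 0,1,0,-6; 0,0,1,8]
    let R := (A.charpoly.map (algebraMap ℤ ℂ)).roots
    A.charpoly = X ^ 4 - 8 * X ^ 3 + 6 * X ^ 2 - 8 * X + 1 ∧
    A.det = 1 ∧
    Multiset.card (R.filter (fun z => ‖z‖ = 1)) = 2 ∧
    (∀ z ∈ R, ‖z‖ = 1 →
      (starRingEnd ℂ) z ∈ R ∧ (starRingEnd ℂ) z ≠ z ∧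
        ∀ k : ℕ, 1 ≤ k → z ^ k ≠ 1) ∧
    Multiset.card (R.filter (fun z => ‖z‖ ≠ 1)) = 2 ∧
    (∀ z ∈ R, ‖z‖ ≠ 1 → z.im = 0) := by
  intro A R
  have hcp : A.charpoly = X ^ 4 - 8 * X ^ 3 + 6 * X ^ 2 - 8 * X + 1 := by
    show (!![0,0,0,-1; 1,0,0,8; 0,1,0,-6; 0,0,1,8] : Matrix (Fin 4) (Fin 4) ℤ).charpoly = _
    simp only [Matrix.charpoly, Matrix.det_succ_row_zero, Fin.sum_univ_succ, charmatrix_apply,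
      Fin.sum_univ_zero, Matrix.submatrix_apply, Fin.succAbove, Fin.castSucc, Fin.castAdd,
      Fin.castLE, Fin.succ, Fin.lt_def, Matrix.diagonal_apply]
    norm_num [Fin.ext_iff, Matrix.vecHead, Matrix.vecTail]
    ring
  have hdet : A.det = 1 := by
    show (!![0,0,0,-1; 1,0,0,8; 0,1,0,-6; 0,0,1,8] : Matrix (Fin 4) (Fin 4) ℤ).det = 1
    simp [Matrix.det_succ_row_zero, Fin.sum_univ_succ, Matrix.submatrix, Fin.succAbove,
      Matrix.vecHead,
      Matrix.vecTail]
  have hmap : (X ^ 4 - 8 * X ^ 3 + 6 * X ^ 2 - 8 * X + 1 : ℤ[X]).map (algebraMap ℤ ℂ)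
      = (X ^ 4 - 8 * X ^ 3 + 6 * X ^ 2 - 8 * X + 1 : ℂ[X]) := by
    simp [Polynomial.map_add, Polynomial.map_sub, Polynomial.map_mul, Polynomial.map_pow,
      Polynomial.map_ofNat]
  have hR : R = ({zc1} + {zc2}) + ({zc3} + {zc4}) := by
    show (A.charpoly.map (algebraMap ℤ ℂ)).roots = _
    rw [hcp, hmap, hroots]
  refine ⟨hcp, hdet, ?_, ?_, ?_, ?_⟩
  · rw [hR]
    simp [Multiset.filter_add, Multiset.filter_singleton, habs1, habs2, habs3, habs4]
  · intro z hz habs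
    rw [hR] at hz
    simp only [Multiset.mem_add, Multiset.mem_singleton] at hz
    rcases hz with (h | h) | (h | h)
    · subst h
      refine ⟨?_, ?_, ?_⟩
      · rw [hconj1, hR]; simp
      · rw [hconj1]; exact hne12
      · exact no_root_of_unity zc1 (4 - 2 * rt3) hquad1 (by rw [hconj1]; exact hsum12) hs2_val hsle_val hirr_val
    · subst h
      refine ⟨?_, ?_, ?_⟩
      · rw [hconj2, hR]; simp
      · rw [hconj2]; exact hne12.symm
      · exact no_root_of_unity zc2 (4 - 2 * rt3) hquad2 (by rw [hconj2, add_comm]; exact hsum12) hs2_val hsle_val hirr_val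
    · subst h; exact absurd habs habs3
    · subst h; exact absurd habs habs4
  · rw [hR]
    simp [Multiset.filter_add, Multiset.filter_singleton, habs1, habs2, habs3, habs4]
  · intro z hz habs
    rw [hR] at hz
    simp only [Multiset.mem_add, Multiset.mem_singleton] at hz
    rcases hz with (h | h) | (h | h)
    · subst h; exact absurd habs1 habs
    · subst h; exact absurd habs2 habs
    · subst h; simp [zc3]
    · subst h; simp [zc4]
end
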